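/- Let X = (X₁,X₂,X₃) ∈ R³ be a nonzero formal vector field and let ω¹, ω², ω³ ∈ R³ be three integrable formal 1-forms that are pairwise independent (for each i ≠ j there are indices p, q with ωⁱ_p·ωʲ_q ≠ ωⁱ_q·ωʲ_p) and each tangent to X (X₁ωⁱ₁ + X₂ωⁱ₂ + X₃ωⁱ₃ = 0 for i = 1,2,3). Then there exist nonzero g₁, g₂, g₃ ∈ R such that g₃·ω³ = g₁·ω¹ + g₂·ω² componentwise and, for every s, t ∈ ℂ, the 1-form s·g₁·ω¹ + t·g₂·ω² is integrable and tangent to X. In particular, a formal vector field tangent to three pairwise independent integrable 1-forms is tangent to a whole pencil of integrable 1-forms. -/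

import Mathlib

open MvPowerSeries Finset

/-- Formal partial derivative `∂ᵢ` on multivariate formal power series. -/
noncomputable def pd {n : ℕ} (i : Fin n) (f : MvPowerSeries (Fin n) ℂ) :
    MvPowerSeries (Fin n) ℂ :=
  fun m => ((m i : ℂ) + 1) * MvPowerSeries.coeff (R := ℂ) (m + Finsupp.single i 1) f

/-- A formal 1-form `ω = ω₀ dx₁ + ω₁ dx₂ + ω₂ dx₃` on `(ℂ³,0)` is integrable
(`ω ∧ dω = 0`). -/
def Integrable3 (ω : Fin 3 → MvPowerSeries (Fin 3) ℂ) : Prop :=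
  ω 0 * (pd 1 (ω 2) - pd 2 (ω 1)) + ω 1 * (pd 2 (ω 0) - pd 0 (ω 2))
    + ω 2 * (pd 0 (ω 1) - pd 1 (ω 0)) = 0

/-- The vector field `Xv` is tangent to the 1-form `ω`: `i_X ω = 0`. -/
def Tangent3 (Xv ω : Fin 3 → MvPowerSeries (Fin 3) ℂ) : Prop :=
  Xv 0 * ω 0 + Xv 1 * ω 1 + Xv 2 * ω 2 = 0

/-- Two formal 1-forms are independent: `ω ∧ η ≠ 0`. -/
def Indep3 (ω η : Fin 3 → MvPowerSeries (Fin 3) ℂ) : Prop :=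
  ∃ p q : Fin 3, ω p * η q ≠ ω q * η p


lemma coeff_pd {n : ℕ} (i : Fin n) (f : MvPowerSeries (Fin n) ℂ) (m : Fin n →₀ ℕ) :
    MvPowerSeries.coeff (R := ℂ) m (pd i f) = ((m i : ℂ) + 1) *
      MvPowerSeries.coeff (R := ℂ) (m + Finsupp.single i 1) f := rfl

lemma pd_add {n : ℕ} (i : Fin n) (f g : MvPowerSeries (Fin n) ℂ) :
    pd i (f + g) = pd i f + pd i g := by
  apply MvPowerSeries.ext; intro m
  simp [coeff_pd, map_add, mul_add]

lemma pd_C {n : ℕ} (i : Fin n) (s : ℂ) : pd i (C (σ := Fin n) (R := ℂ) s) = 0 := by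
  apply MvPowerSeries.ext; intro m
  classical
  rw [coeff_pd, MvPowerSeries.coeff_C]
  have : m + Finsupp.single i 1 ≠ 0 := by
    intro h
    have := DFunLike.congr_fun h i
    simp at this
  simp [this]

lemma shift_sum_fst {n : ℕ} (i : Fin n) (m : Fin n →₀ ℕ)
    (f g : MvPowerSeries (Fin n) ℂ) :
    ∑ p ∈ antidiagonal (m + Finsupp.single i 1), (((p.1 : Fin n →₀ ℕ)) i : ℂ) * (MvPowerSeries.coeff (R := ℂ) p.1 f * MvPowerSeries.coeff (R := ℂ) p.2 g)
      = ∑ p ∈ antidiagonal m, ((p.1 i : ℂ) + 1) * (MvPowerSeries.coeff (R := ℂ) (p.1 + Finsupp.single i 1) f * MvPowerSeries.coeff (R := ℂ) p.2 g) := by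
  classical
  rw [← Finset.sum_filter_of_ne
    (p := fun p : (Fin n →₀ ℕ) × (Fin n →₀ ℕ) => p.1 i ≠ 0)
    (fun (p : (Fin n →₀ ℕ) × (Fin n →₀ ℕ)) _ h h0 => h (by simp [h0]))]
  refine Finset.sum_nbij' (fun p => (p.1 - Finsupp.single i 1, p.2))
    (fun p => (p.1 + Finsupp.single i 1, p.2)) ?_ ?_ ?_ ?_ ?_
  · rintro ⟨a, b⟩ hab
    simp only [Finset.mem_filter, Finset.HasAntidiagonal.mem_antidiagonal] at hab
    obtain ⟨hab, ha⟩ := hab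
    have hle : Finsupp.single i 1 ≤ a := Finsupp.single_le_iff.mpr (Nat.one_le_iff_ne_zero.mpr ha)
    simp only [Finset.HasAntidiagonal.mem_antidiagonal]
    have h2 : a - Finsupp.single i 1 + b + Finsupp.single i 1 = m + Finsupp.single i 1 := by
      rw [add_right_comm, tsub_add_cancel_of_le hle, hab]
    exact add_right_cancel h2
  · rintro ⟨a, b⟩ hab
    simp only [Finset.HasAntidiagonal.mem_antidiagonal] at hab
    simp only [Finset.mem_filter, Finset.HasAntidiagonal.mem_antidiagonal]
    refine ⟨by rw [add_right_comm, hab], by simp⟩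
  · rintro ⟨a, b⟩ hab
    simp only [Finset.mem_filter, Finset.HasAntidiagonal.mem_antidiagonal] at hab
    have hle : Finsupp.single i 1 ≤ a :=
      Finsupp.single_le_iff.mpr (Nat.one_le_iff_ne_zero.mpr hab.2)
    simp [tsub_add_cancel_of_le hle]
  · rintro ⟨a, b⟩ _
    simp
  · rintro ⟨a, b⟩ hab
    simp only [Finset.mem_filter, Finset.HasAntidiagonal.mem_antidiagonal] at hab
    have hle : Finsupp.single i 1 ≤ a :=
      Finsupp.single_le_iff.mpr (Nat.one_le_iff_ne_zero.mpr hab.2)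
    have h0 : ((a - Finsupp.single i 1 : Fin n →₀ ℕ)) i + 1 = a i := by
      have h1 := Finsupp.single_le_iff.mp hle
      rw [Finsupp.tsub_apply, Finsupp.single_apply]
      simp only [if_true, eq_self_iff_true]
      omega
    have h1 : (((a - Finsupp.single i 1 : Fin n →₀ ℕ)) i : ℂ) + 1 = (a i : ℂ) := by
      rw [← h0]; push_cast; ring
    rw [h1, tsub_add_cancel_of_le hle]

lemma shift_sum_snd {n : ℕ} (i : Fin n) (m : Fin n →₀ ℕ)
    (f g : MvPowerSeries (Fin n) ℂ) :
    ∑ p ∈ antidiagonal (m + Finsupp.single i 1), (((p.2 : Fin n →₀ ℕ)) i : ℂ) * (MvPowerSeries.coeff (R := ℂ) p.1 f * MvPowerSeries.coeff (R := ℂ) p.2 g)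
      = ∑ p ∈ antidiagonal m, ((p.2 i : ℂ) + 1) * (MvPowerSeries.coeff (R := ℂ) p.1 f * MvPowerSeries.coeff (R := ℂ) (p.2 + Finsupp.single i 1) g) := by
  classical
  have h1 : ∑ p ∈ antidiagonal (m + Finsupp.single i 1),
      (((p.2 : Fin n →₀ ℕ)) i : ℂ) * (MvPowerSeries.coeff (R := ℂ) p.1 f * MvPowerSeries.coeff (R := ℂ) p.2 g)
      = ∑ p ∈ antidiagonal (m + Finsupp.single i 1),
        (((p.1 : Fin n →₀ ℕ)) i : ℂ) * (MvPowerSeries.coeff (R := ℂ) p.1 g * MvPowerSeries.coeff (R := ℂ) p.2 f) := by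
    refine Finset.sum_nbij' Prod.swap Prod.swap ?_ ?_ ?_ ?_ ?_ <;>
      (try rintro ⟨a, b⟩ hab) <;>
      simp_all [Finset.mem_antidiagonal, add_comm, mul_comm]
  have h2 : ∑ p ∈ antidiagonal m, ((p.2 i : ℂ) + 1) * (MvPowerSeries.coeff (R := ℂ) p.1 f * MvPowerSeries.coeff (R := ℂ) (p.2 + Finsupp.single i 1) g)
      = ∑ p ∈ antidiagonal m, ((p.1 i : ℂ) + 1) * (MvPowerSeries.coeff (R := ℂ) (p.1 + Finsupp.single i 1) g * MvPowerSeries.coeff (R := ℂ) p.2 f) := by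
    refine Finset.sum_nbij' Prod.swap Prod.swap ?_ ?_ ?_ ?_ ?_ <;>
      (try rintro ⟨a, b⟩ hab) <;>
      simp_all [Finset.mem_antidiagonal, add_comm, mul_comm]
  rw [h1, h2, shift_sum_fst]

lemma pd_mul {n : ℕ} (i : Fin n) (f g : MvPowerSeries (Fin n) ℂ) :
    pd i (f * g) = pd i f * g + f * pd i g := by
  classical
  apply MvPowerSeries.ext; intro m
  rw [map_add, coeff_pd, MvPowerSeries.coeff_mul, MvPowerSeries.coeff_mul,
    MvPowerSeries.coeff_mul, Finset.mul_sum]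
  have key : ∀ p ∈ antidiagonal (m + Finsupp.single i 1),
      ((m i : ℂ) + 1) * (MvPowerSeries.coeff (R := ℂ) p.1 f * MvPowerSeries.coeff (R := ℂ) p.2 g)
      = (((p.1 : Fin n →₀ ℕ)) i : ℂ) * (MvPowerSeries.coeff (R := ℂ) p.1 f * MvPowerSeries.coeff (R := ℂ) p.2 g)
        + (((p.2 : Fin n →₀ ℕ)) i : ℂ) *
          (MvPowerSeries.coeff (R := ℂ) p.1 f * MvPowerSeries.coeff (R := ℂ) p.2 g) := by
    rintro ⟨a, b⟩ hab
    simp only [Finset.HasAntidiagonal.mem_antidiagonal] at hab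
    have : a i + b i = m i + 1 := by
      have := DFunLike.congr_fun hab i
      simpa using this
    have hc : (a i : ℂ) + (b i : ℂ) = (m i : ℂ) + 1 := by
      exact_mod_cast this
    linear_combination (-(MvPowerSeries.coeff (R := ℂ) a f * MvPowerSeries.coeff (R := ℂ) b g)) * hc
  rw [Finset.sum_congr rfl key, Finset.sum_add_distrib, shift_sum_fst, shift_sum_snd]
  congr 1
  · refine Finset.sum_congr rfl fun p _ => ?_
    rw [coeff_pd]; ring
  · refine Finset.sum_congr rfl fun p _ => ?_
    rw [coeff_pd]; ring

section Geom

local notation "R3" => MvPowerSeries (Fin 3) ℂ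

/-- cross product of two triples of power series -/
noncomputable def cross3 (u v : Fin 3 → R3) : Fin 3 → R3 :=
  ![u 1 * v 2 - u 2 * v 1, u 2 * v 0 - u 0 * v 2, u 0 * v 1 - u 1 * v 0]

lemma cross3_parallel (Xv u v : Fin 3 → R3)
    (hu : Tangent3 Xv u) (hv : Tangent3 Xv v) (p q : Fin 3) :
    cross3 u v p * Xv q = cross3 u v q * Xv p := by
  unfold Tangent3 at hu hv
  fin_cases p <;> fin_cases q <;> simp [cross3] <;>
    first
      | ring1
      | linear_combination v 0 * hu - u 0 * hv
      | linear_combination u 0 * hv - v 0 * hu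
      | linear_combination v 1 * hu - u 1 * hv
      | linear_combination u 1 * hv - v 1 * hu
      | linear_combination v 2 * hu - u 2 * hv
      | linear_combination u 2 * hv - v 2 * hu

lemma cross3_ne_zero (Xv u v : Fin 3 → R3) (k : Fin 3) (hk : Xv k ≠ 0)
    (hu : Tangent3 Xv u) (hv : Tangent3 Xv v) (hind : Indep3 u v) :
    cross3 u v k ≠ 0 := by
  intro h0
  obtain ⟨p, q, hpq⟩ := hind
  apply hpq
  have hz : ∀ r : Fin 3, cross3 u v r = 0 := by
    intro r
    have h := cross3_parallel Xv u v hu hv r k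
    rw [h0, zero_mul] at h
    exact (mul_eq_zero.mp h).resolve_right hk
  have hz0 : u 1 * v 2 - u 2 * v 1 = 0 := by simpa [cross3] using hz 0
  have hz1 : u 2 * v 0 - u 0 * v 2 = 0 := by simpa [cross3] using hz 1
  have hz2 : u 0 * v 1 - u 1 * v 0 = 0 := by simpa [cross3] using hz 2
  fin_cases p <;> fin_cases q <;> (try simp) <;>
    first
      | rfl
      | linear_combination hz0
      | linear_combination -hz0
      | linear_combination hz1
      | linear_combination -hz1
      | linear_combination hz2
      | linear_combination -hz2

lemma det_eq_zero (Xv u v w : Fin 3 → R3) (k : Fin 3) (hk : Xv k ≠ 0)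
    (hu : Tangent3 Xv u) (hv : Tangent3 Xv v) (hw : Tangent3 Xv w) :
    u 0 * (v 1 * w 2 - v 2 * w 1) + u 1 * (v 2 * w 0 - v 0 * w 2)
      + u 2 * (v 0 * w 1 - v 1 * w 0) = 0 := by
  unfold Tangent3 at hu hv hw
  fin_cases k
  · refine (mul_eq_zero.mp (show (u 0 * (v 1 * w 2 - v 2 * w 1) + u 1 * (v 2 * w 0 - v 0 * w 2)
      + u 2 * (v 0 * w 1 - v 1 * w 0)) * Xv 0 = 0 from ?_)).resolve_right hk
    linear_combination (v 1 * w 2 - v 2 * w 1) * hu + (w 1 * u 2 - w 2 * u 1) * hv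
      + (u 1 * v 2 - u 2 * v 1) * hw
  · refine (mul_eq_zero.mp (show (u 0 * (v 1 * w 2 - v 2 * w 1) + u 1 * (v 2 * w 0 - v 0 * w 2)
      + u 2 * (v 0 * w 1 - v 1 * w 0)) * Xv 1 = 0 from ?_)).resolve_right hk
    linear_combination (v 2 * w 0 - v 0 * w 2) * hu + (w 2 * u 0 - w 0 * u 2) * hv
      + (u 2 * v 0 - u 0 * v 2) * hw
  · refine (mul_eq_zero.mp (show (u 0 * (v 1 * w 2 - v 2 * w 1) + u 1 * (v 2 * w 0 - v 0 * w 2)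
      + u 2 * (v 0 * w 1 - v 1 * w 0)) * Xv 2 = 0 from ?_)).resolve_right hk
    linear_combination (v 0 * w 1 - v 1 * w 0) * hu + (w 0 * u 1 - w 1 * u 0) * hv
      + (u 0 * v 1 - u 1 * v 0) * hw

lemma decomposition (u v w : Fin 3 → R3)
    (hdet : u 0 * (v 1 * w 2 - v 2 * w 1) + u 1 * (v 2 * w 0 - v 0 * w 2)
      + u 2 * (v 0 * w 1 - v 1 * w 0) = 0) (k p : Fin 3) :
    cross3 u v k * w p = cross3 w v k * u p + cross3 u w k * v p := by
  fin_cases k <;> fin_cases p <;> simp [cross3] <;>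
    first
      | ring1
      | linear_combination hdet
      | linear_combination -hdet


lemma integrable_smul (g : R3) (u : Fin 3 → R3) (hu : Integrable3 u) :
    Integrable3 (fun p => g * u p) := by
  unfold Integrable3 at hu ⊢
  simp only [pd_mul]
  linear_combination g ^ 2 * hu

lemma integrable_pencil (u v : Fin 3 → R3) (g h : R3)
    (hu : Integrable3 u) (hv : Integrable3 v)
    (hsum : Integrable3 (fun p => g * u p + h * v p)) (s t : ℂ) :
    Integrable3 (fun p => C (σ := Fin 3) (R := ℂ) s * (g * u p) + C (σ := Fin 3) (R := ℂ) t * (h * v p)) := by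
  unfold Integrable3 at hu hv hsum ⊢
  simp only [pd_add, pd_mul, pd_C, zero_mul, zero_add] at hsum ⊢
  linear_combination (C (σ := Fin 3) (R := ℂ) s ^ 2 - C (σ := Fin 3) (R := ℂ) s * C (σ := Fin 3) (R := ℂ) t) * g ^ 2 * hu
    + (C (σ := Fin 3) (R := ℂ) t ^ 2 - C (σ := Fin 3) (R := ℂ) s * C (σ := Fin 3) (R := ℂ) t) * h ^ 2 * hv
    + C (σ := Fin 3) (R := ℂ) s * C (σ := Fin 3) (R := ℂ) t * hsum


/-- A formal vector field tangent to three pairwise independent integrable 1-forms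
is tangent to a whole pencil of integrable 1-forms. -/
theorem tangent_to_three_implies_tangent_to_pencil
    (Xv : Fin 3 → MvPowerSeries (Fin 3) ℂ) (hX : Xv ≠ 0)
    (ω₁ ω₂ ω₃ : Fin 3 → MvPowerSeries (Fin 3) ℂ)
    (hi₁ : Integrable3 ω₁) (hi₂ : Integrable3 ω₂) (hi₃ : Integrable3 ω₃)
    (h12 : Indep3 ω₁ ω₂) (h13 : Indep3 ω₁ ω₃) (h23 : Indep3 ω₂ ω₃)
    (ht₁ : Tangent3 Xv ω₁) (ht₂ : Tangent3 Xv ω₂) (ht₃ : Tangent3 Xv ω₃) :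
    ∃ g₁ g₂ g₃ : MvPowerSeries (Fin 3) ℂ, g₁ ≠ 0 ∧ g₂ ≠ 0 ∧ g₃ ≠ 0 ∧
      (∀ p : Fin 3, g₃ * ω₃ p = g₁ * ω₁ p + g₂ * ω₂ p) ∧
      (∀ s t : ℂ,
        Integrable3 (fun p => C (σ := Fin 3) (R := ℂ) s * (g₁ * ω₁ p) + C (σ := Fin 3) (R := ℂ) t * (g₂ * ω₂ p)) ∧
        Tangent3 Xv (fun p => C (σ := Fin 3) (R := ℂ) s * (g₁ * ω₁ p) + C (σ := Fin 3) (R := ℂ) t * (g₂ * ω₂ p))) := by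
  have hex : ∃ k, Xv k ≠ 0 := by
    by_contra hc
    push_neg at hc
    exact hX (funext fun k => hc k)
  obtain ⟨k, hk⟩ := hex
  have h32 : Indep3 ω₃ ω₂ := by
    obtain ⟨p, q, hpq⟩ := h23
    exact ⟨q, p, fun e => hpq (by linear_combination e)⟩
  have hdet := det_eq_zero Xv ω₁ ω₂ ω₃ k hk ht₁ ht₂ ht₃
  have hdec := decomposition ω₁ ω₂ ω₃ hdet k
  refine ⟨cross3 ω₃ ω₂ k, cross3 ω₁ ω₃ k, cross3 ω₁ ω₂ k,
    cross3_ne_zero Xv ω₃ ω₂ k hk ht₃ ht₂ h32,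
    cross3_ne_zero Xv ω₁ ω₃ k hk ht₁ ht₃ h13,
    cross3_ne_zero Xv ω₁ ω₂ k hk ht₁ ht₂ h12,
    fun p => hdec p, fun s t => ⟨?_, ?_⟩⟩
  · apply integrable_pencil _ _ _ _ hi₁ hi₂
    have hfun : (fun p => cross3 ω₃ ω₂ k * ω₁ p + cross3 ω₁ ω₃ k * ω₂ p)
        = fun p => cross3 ω₁ ω₂ k * ω₃ p := funext fun p => (hdec p).symm
    rw [hfun]
    exact integrable_smul _ _ hi₃
  · unfold Tangent3 at ht₁ ht₂ ⊢
    simp only []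
    linear_combination C (σ := Fin 3) (R := ℂ) s * cross3 ω₃ ω₂ k * ht₁
      + C (σ := Fin 3) (R := ℂ) t * cross3 ω₁ ω₃ k * ht₂
end Geom
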